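/- Determinant reduction for the counterexample ansatz: let b ∈ ℝ and let φ : ℝ → ℝ be twice differentiable. Define u : ℝ² → ℝ by u(x₁, x₂) = (b/2)x₂² + φ(x₁), and define the symmetric matrix field A(x₁,x₂) = diag(−b²x₂², −b − b²x₂²). Then for every (x₁, x₂) ∈ ℝ², det(D²u(x₁,x₂) + |∇u(x₁,x₂)|²·I + A(x₁,x₂)) = (φ''(x₁) + φ'(x₁)²)·φ'(x₁)², where D²u is the Hessian matrix of u, ∇u its gradient, and I the 2×2 identity matrix. -/

import Mathlib

open Finset

/-- The `i`-th partial derivative `∂_i u (x)`. -/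
noncomputable def egrad (n : ℕ) (u : (Fin n → ℝ) → ℝ) (x : Fin n → ℝ) (i : Fin n) : ℝ :=
  fderiv ℝ u x (Pi.single i 1)

/-- The squared Euclidean length `|∇u(x)|²` of the gradient. -/
noncomputable def gradSq (n : ℕ) (u : (Fin n → ℝ) → ℝ) (x : Fin n → ℝ) : ℝ :=
  ∑ i : Fin n, (egrad n u x i) ^ 2

/-- The Hessian entry `∂_i∂_j u(x)`. -/
noncomputable def ehess (n : ℕ) (u : (Fin n → ℝ) → ℝ) (x : Fin n → ℝ) (i j : Fin n) : ℝ :=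
  fderiv ℝ (fun y => fderiv ℝ u y (Pi.single j 1)) x (Pi.single i 1)

/-- The ansatz `u(x₁,x₂) = (b/2) x₂² + φ(x₁)`. -/
noncomputable def uAnsatz (b : ℝ) (φ : ℝ → ℝ) (x : Fin 2 → ℝ) : ℝ :=
  b / 2 * (x 1) ^ 2 + φ (x 0)

/-- The matrix `A(x₁,x₂) = diag(-b²x₂², -b - b²x₂²)`. -/
noncomputable def Amat (b : ℝ) (x : Fin 2 → ℝ) : Matrix (Fin 2) (Fin 2) ℝ :=
  !![-(b ^ 2) * (x 1) ^ 2, 0; 0, -b - b ^ 2 * (x 1) ^ 2]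

/-- The total derivative of the ansatz. -/
noncomputable def Lmap (b : ℝ) (φ : ℝ → ℝ) (x : Fin 2 → ℝ) : (Fin 2 → ℝ) →L[ℝ] ℝ :=
  (b * x 1) • ContinuousLinearMap.proj 1 + (deriv φ (x 0)) • ContinuousLinearMap.proj 0

lemma hasFDerivAt_uAnsatz (b : ℝ) (φ : ℝ → ℝ) (hφ : Differentiable ℝ φ) (x : Fin 2 → ℝ) :
    HasFDerivAt (uAnsatz b φ) (Lmap b φ x) x := by
  have hproj1 : HasFDerivAt (fun y : Fin 2 → ℝ => y 1)
      (ContinuousLinearMap.proj 1 : (Fin 2 → ℝ) →L[ℝ] ℝ) x := hasFDerivAt_apply 1 x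
  have hproj0 : HasFDerivAt (fun y : Fin 2 → ℝ => y 0)
      (ContinuousLinearMap.proj 0 : (Fin 2 → ℝ) →L[ℝ] ℝ) x := hasFDerivAt_apply 0 x
  have hsq : HasDerivAt (fun t : ℝ => b / 2 * t ^ 2) (b * x 1) (x 1) := by
    have h := (hasDerivAt_pow 2 (x 1)).const_mul (b / 2)
    exact h.congr_deriv (by ring)
  have h1 := hsq.comp_hasFDerivAt x hproj1
  have h2 := ((hφ (x 0)).hasDerivAt).comp_hasFDerivAt x hproj0
  exact h1.add h2

lemma fderiv_apply_uAnsatz (b : ℝ) (φ : ℝ → ℝ) (hφ : Differentiable ℝ φ) (x : Fin 2 → ℝ)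
    (j : Fin 2) :
    fderiv ℝ (uAnsatz b φ) x (Pi.single j 1)
      = b * x 1 * (Pi.single j 1 : Fin 2 → ℝ) 1
        + deriv φ (x 0) * (Pi.single j 1 : Fin 2 → ℝ) 0 := by
  rw [(hasFDerivAt_uAnsatz b φ hφ x).fderiv]
  simp [Lmap, mul_comm]

lemma ehess_uAnsatz (b : ℝ) (φ : ℝ → ℝ) (hφ : Differentiable ℝ φ)
    (hφ' : Differentiable ℝ (deriv φ)) (x : Fin 2 → ℝ) (i j : Fin 2) :
    ehess 2 (uAnsatz b φ) x i j
      = b * (Pi.single j 1 : Fin 2 → ℝ) 1 * (Pi.single i 1 : Fin 2 → ℝ) 1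
        + (Pi.single j 1 : Fin 2 → ℝ) 0
          * (deriv (deriv φ) (x 0) * (Pi.single i 1 : Fin 2 → ℝ) 0) := by
  set c1 : ℝ := (Pi.single j 1 : Fin 2 → ℝ) 1
  set c0 : ℝ := (Pi.single j 1 : Fin 2 → ℝ) 0
  have hfun : (fun y => fderiv ℝ (uAnsatz b φ) y (Pi.single j 1))
      = fun y : Fin 2 → ℝ => (b * c1) * y 1 + c0 * deriv φ (y 0) := by
    funext y
    rw [fderiv_apply_uAnsatz b φ hφ y j]
    ring
  have h1 : HasFDerivAt (fun y : Fin 2 → ℝ => (b * c1) * y 1)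
      ((b * c1) • (ContinuousLinearMap.proj 1 : (Fin 2 → ℝ) →L[ℝ] ℝ)) x :=
    (hasFDerivAt_apply 1 x).const_mul (b * c1)
  have h2 : HasFDerivAt (fun y : Fin 2 → ℝ => c0 * deriv φ (y 0))
      (c0 • ((deriv (deriv φ) (x 0)) •
        (ContinuousLinearMap.proj 0 : (Fin 2 → ℝ) →L[ℝ] ℝ))) x :=
    by
      have hd : HasDerivAt (deriv φ) (deriv (deriv φ) (x 0)) (x 0) := (hφ' (x 0)).hasDerivAt
      have hp : HasFDerivAt (fun y : Fin 2 → ℝ => y 0)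
          (ContinuousLinearMap.proj 0 : (Fin 2 → ℝ) →L[ℝ] ℝ) x := hasFDerivAt_apply 0 x
      exact (hd.comp_hasFDerivAt x hp).const_mul c0
  have H : fderiv ℝ (fun y : Fin 2 → ℝ => (b * c1) * y 1 + c0 * deriv φ (y 0)) x = _ :=
    (h1.add h2).fderiv
  unfold ehess
  rw [hfun, H]
  simp [mul_comm]

lemma pi_single_one_one : (Pi.single (1 : Fin 2) 1 : Fin 2 → ℝ) 1 = 1 := by simp
lemma pi_single_zero_zero : (Pi.single (0 : Fin 2) 1 : Fin 2 → ℝ) 0 = 1 := by simp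
lemma pi_single_zero_one : (Pi.single (0 : Fin 2) 1 : Fin 2 → ℝ) 1 = 0 := by
  simp [Pi.single_apply]
lemma pi_single_one_zero : (Pi.single (1 : Fin 2) 1 : Fin 2 → ℝ) 0 = 0 := by
  simp [Pi.single_apply]

/-- Determinant reduction for the counterexample ansatz: for
`u(x₁,x₂) = (b/2)x₂² + φ(x₁)` and `A = diag(-b²x₂², -b - b²x₂²)`,
`det(D²u + |∇u|² I + A) = (φ'' + φ'²) φ'²` at every point. -/
theorem det_reduction_ansatz (b : ℝ) (φ : ℝ → ℝ)
    (hφ : Differentiable ℝ φ) (hφ' : Differentiable ℝ (deriv φ)) (x : Fin 2 → ℝ) :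
    (Matrix.of (fun i j : Fin 2 =>
        ehess 2 (uAnsatz b φ) x i j
          + gradSq 2 (uAnsatz b φ) x * (if i = j then 1 else 0))
      + Amat b x).det
      = (deriv (deriv φ) (x 0) + (deriv φ (x 0)) ^ 2) * (deriv φ (x 0)) ^ 2 := by
  have hg : gradSq 2 (uAnsatz b φ) x = deriv φ (x 0) ^ 2 + (b * x 1) ^ 2 := by
    unfold gradSq egrad
    rw [Fin.sum_univ_two, fderiv_apply_uAnsatz b φ hφ x 0, fderiv_apply_uAnsatz b φ hφ x 1,
      pi_single_zero_zero, pi_single_zero_one, pi_single_one_zero, pi_single_one_one]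
    ring
  have h00 : ehess 2 (uAnsatz b φ) x 0 0 = deriv (deriv φ) (x 0) := by
    rw [ehess_uAnsatz b φ hφ hφ' x 0 0, pi_single_zero_zero, pi_single_zero_one]; ring
  have h01 : ehess 2 (uAnsatz b φ) x 0 1 = 0 := by
    rw [ehess_uAnsatz b φ hφ hφ' x 0 1, pi_single_zero_one, pi_single_one_zero,
      pi_single_one_one]; ring
  have h10 : ehess 2 (uAnsatz b φ) x 1 0 = 0 := by
    rw [ehess_uAnsatz b φ hφ hφ' x 1 0, pi_single_zero_zero, pi_single_zero_one,
      pi_single_one_zero]; ring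
  have h11 : ehess 2 (uAnsatz b φ) x 1 1 = b := by
    rw [ehess_uAnsatz b φ hφ hφ' x 1 1, pi_single_one_one, pi_single_one_zero]; ring
  rw [Matrix.det_fin_two]
  simp only [Matrix.add_apply, Matrix.of_apply, Amat, Matrix.cons_val', Matrix.cons_val_zero,
    Matrix.cons_val_one, Matrix.head_cons, Matrix.empty_val', Matrix.cons_val_fin_one,
    Matrix.head_fin_const, h00, h01, h10, h11, hg]
  norm_num
  ring
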